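/- Let R and B be commutative rings and let f : R → B be an additive map (a homomorphism of underlying abelian groups, i.e., of ℤ-modules). Let Sym_ℤ(R) denote the symmetric algebra of R regarded as a ℤ-module, let α_R : Sym_ℤ(R) → R be the ℤ-algebra homomorphism induced by the identity ℤ-linear map R → R via the universal property (and similarly α_B : Sym_ℤ(B) → B), and let Sym(f) : Sym_ℤ(R) → Sym_ℤ(B) be the ℤ-algebra homomorphism functorially induced by the ℤ-linear map f. Then f ∘ α_R = α_B ∘ Sym(f) (as maps of sets Sym_ℤ(R) → B) if and only if f is a unital ring homomorphism. -/

import Mathlib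

/-- The commutation relation on the tensor algebra of a `ℤ`-module whose quotient is
the symmetric algebra. -/
def SymRel (M : Type) [AddCommGroup M] : TensorAlgebra ℤ M → TensorAlgebra ℤ M → Prop :=
  fun a b => ∃ x y : M,
    a = TensorAlgebra.ι ℤ x * TensorAlgebra.ι ℤ y ∧
    b = TensorAlgebra.ι ℤ y * TensorAlgebra.ι ℤ x

/-- The symmetric algebra `Sym_ℤ(M)` of a `ℤ`-module (abelian group) `M`: the free
commutative ring on the `ℤ`-module `M`, realized as the tensor algebra modulo the
commutation relation. -/
def SymZ (M : Type) [AddCommGroup M] : Type := RingQuot (SymRel M)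

noncomputable instance (M : Type) [AddCommGroup M] : Ring (SymZ M) :=
  inferInstanceAs (Ring (RingQuot (SymRel M)))

noncomputable instance (M : Type) [AddCommGroup M] : Algebra ℤ (SymZ M) :=
  inferInstanceAs (Algebra ℤ (RingQuot (SymRel M)))

/-- The universal property of `Sym_ℤ`: a `ℤ`-linear map `M → A` into a commutative
ring `A` induces a ring (`ℤ`-algebra) homomorphism `Sym_ℤ(M) → A`. -/
noncomputable def SymZ.lift {M : Type} [AddCommGroup M] {A : Type} [CommRing A]
    (f : M →ₗ[ℤ] A) : SymZ M →ₐ[ℤ] A :=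
  RingQuot.liftAlgHom ℤ ⟨TensorAlgebra.lift ℤ f, by
    rintro a b ⟨x, y, rfl, rfl⟩
    simp [mul_comm]⟩

/-- The structure map `α_R : Sym_ℤ(R) → R` of a commutative ring `R`, viewed as an
algebra over the monad `Sym_ℤ` on abelian groups: the `ℤ`-algebra homomorphism induced
by the identity `ℤ`-linear map `R → R`. -/
noncomputable def SymZ.alpha (R : Type) [CommRing R] : SymZ R →ₐ[ℤ] R :=
  SymZ.lift (LinearMap.id : R →ₗ[ℤ] R)

/-- Functoriality of `Sym_ℤ`: the `ℤ`-algebra homomorphism `Sym_ℤ(M) → Sym_ℤ(N)`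
induced by a `ℤ`-linear map `f : M → N`. -/
noncomputable def SymZ.map {M N : Type} [AddCommGroup M] [AddCommGroup N]
    (f : M →ₗ[ℤ] N) : SymZ M →ₐ[ℤ] SymZ N :=
  RingQuot.liftAlgHom ℤ
    ⟨TensorAlgebra.lift ℤ
        ((RingQuot.mkAlgHom ℤ (SymRel N)).toLinearMap.comp
          ((TensorAlgebra.ι ℤ).comp f)), by
      rintro a b ⟨x, y, rfl, rfl⟩
      rw [map_mul, map_mul]
      erw [TensorAlgebra.lift_ι_apply, TensorAlgebra.lift_ι_apply]
      show RingQuot.mkAlgHom ℤ (SymRel N) (TensorAlgebra.ι ℤ (f x)) *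
            RingQuot.mkAlgHom ℤ (SymRel N) (TensorAlgebra.ι ℤ (f y)) =
          RingQuot.mkAlgHom ℤ (SymRel N) (TensorAlgebra.ι ℤ (f y)) *
            RingQuot.mkAlgHom ℤ (SymRel N) (TensorAlgebra.ι ℤ (f x))
      rw [← map_mul (RingQuot.mkAlgHom ℤ (SymRel N)) (TensorAlgebra.ι ℤ (f x))
            (TensorAlgebra.ι ℤ (f y)),
        ← map_mul (RingQuot.mkAlgHom ℤ (SymRel N)) (TensorAlgebra.ι ℤ (f y))
            (TensorAlgebra.ι ℤ (f x))]
      exact RingQuot.mkAlgHom_rel ℤ ⟨f x, f y, rfl, rfl⟩⟩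

/-- Let `R`, `B` be commutative rings and `f : R → B` an additive map.  Then
`f ∘ α_R = α_B ∘ Sym(f)` (as maps of sets `Sym_ℤ(R) → B`) if and only if `f` is a
unital ring homomorphism. -/
lemma SymZ.lift_mk_ι {M : Type} [AddCommGroup M] {A : Type} [CommRing A]
    (f : M →ₗ[ℤ] A) (x : M) :
    SymZ.lift f (RingQuot.mkAlgHom ℤ (SymRel M) (TensorAlgebra.ι ℤ x)) = f x := by
  show RingQuot.liftAlgHom ℤ _ (RingQuot.mkAlgHom ℤ (SymRel M) (TensorAlgebra.ι ℤ x)) = f x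
  erw [RingQuot.liftAlgHom_mkAlgHom_apply, TensorAlgebra.lift_ι_apply]

lemma SymZ.alpha_mk_ι {R : Type} [CommRing R] (x : R) :
    SymZ.alpha R (RingQuot.mkAlgHom ℤ (SymRel R) (TensorAlgebra.ι ℤ x)) = x :=
  SymZ.lift_mk_ι _ x

lemma SymZ.map_mk_ι {M N : Type} [AddCommGroup M] [AddCommGroup N]
    (f : M →ₗ[ℤ] N) (x : M) :
    SymZ.map f (RingQuot.mkAlgHom ℤ (SymRel M) (TensorAlgebra.ι ℤ x)) =
      RingQuot.mkAlgHom ℤ (SymRel N) (TensorAlgebra.ι ℤ (f x)) := by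
  show RingQuot.liftAlgHom ℤ _ (RingQuot.mkAlgHom ℤ (SymRel M) (TensorAlgebra.ι ℤ x)) = _
  erw [RingQuot.liftAlgHom_mkAlgHom_apply, TensorAlgebra.lift_ι_apply]
  rfl

theorem comm_with_sym_structure_iff_ringHom (R B : Type) [CommRing R] [CommRing B]
    (f : R →+ B) :
    (∀ x : SymZ R, f (SymZ.alpha R x) = SymZ.alpha B (SymZ.map f.toIntLinearMap x)) ↔
      (f 1 = 1 ∧ ∀ x y : R, f (x * y) = f x * f y) := by
  constructor
  · intro h
    constructor
    · have := h 1
      simpa using this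
    · intro x y
      have := h (RingQuot.mkAlgHom ℤ (SymRel R)
        (TensorAlgebra.ι ℤ x * TensorAlgebra.ι ℤ y))
      rw [map_mul (RingQuot.mkAlgHom ℤ (SymRel R))] at this
      erw [map_mul (SymZ.alpha R), map_mul (SymZ.map f.toIntLinearMap),
        map_mul (SymZ.alpha B)] at this
      simpa only [map_mul, SymZ.alpha_mk_ι, SymZ.map_mk_ι,
        AddMonoidHom.coe_toIntLinearMap] using this
  · rintro ⟨h1, hmul⟩ x
    obtain ⟨a, rfl⟩ := RingQuot.mkAlgHom_surjective ℤ (SymRel R) x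
    induction a using TensorAlgebra.induction with
    | algebraMap r =>
      simp only [algebraMap_int_eq, eq_intCast]
      rw [map_intCast (RingQuot.mkAlgHom ℤ (SymRel R))]
      erw [map_intCast (SymZ.alpha R), map_intCast (SymZ.map f.toIntLinearMap),
        map_intCast (SymZ.alpha B)]
      rw [show ((r : ℤ) : R) = r • (1 : R) by simp, map_zsmul, h1]
      simp
    | ι x =>
      rw [SymZ.alpha_mk_ι, SymZ.map_mk_ι, SymZ.alpha_mk_ι]
      rfl
    | mul a b ha hb =>
      rw [map_mul (RingQuot.mkAlgHom ℤ (SymRel R))]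
      erw [map_mul (SymZ.alpha R), hmul, ha, hb, map_mul (SymZ.map f.toIntLinearMap),
        map_mul (SymZ.alpha B)]
    | add a b ha hb =>
      rw [map_add (RingQuot.mkAlgHom ℤ (SymRel R))]
      erw [map_add (SymZ.alpha R), map_add f, ha, hb, map_add (SymZ.map f.toIntLinearMap),
        map_add (SymZ.alpha B)]
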